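/- Let A be an order graded by an abelian group Γ via (B_γ)_{γ∈Γ}. Then every idempotent of A lies in B_1, i.e., Id(A) = Id(B_1); consequently A is connected if and only if B_1 is connected. -/

import Mathlib

open scoped TensorProduct

/-- A `Γ`-grading of a commutative ring `A`: a family of additive subgroups
`B γ` with `B γ * B δ ⊆ B (γ*δ)` such that every element of `A` has a unique
finitely-supported decomposition into homogeneous components. -/
def IsGrading {A Γ : Type*} [CommRing A] [CommGroup Γ] (B : Γ → AddSubgroup A) : Prop :=
  (∀ γ δ : Γ, ∀ x ∈ B γ, ∀ y ∈ B δ, x * y ∈ B (γ * δ)) ∧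
  (∀ a : A, ∃! f : Γ →₀ A, (∀ γ, f γ ∈ B γ) ∧ f.sum (fun _ x => x) = a)

namespace GradedOrderAux

/-- In a ring that is free as a `ℤ`-module, an element divisible by `p ^ k`
for every `k` is zero. -/
theorem eq_zero_of_forall_exists_pow_mul {R ι : Type*} [CommRing R] {M : Module ℤ R}
    (b : Module.Basis ι ℤ R) {p : ℕ} (hp : 2 ≤ p) {x : R}
    (h : ∀ k : ℕ, ∃ y : R, x = (p : R) ^ k * y) : x = 0 := by
  classical
  rw [← (b.repr).map_eq_zero_iff]
  ext i
  rw [Finsupp.coe_zero, Pi.zero_apply]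
  by_contra hm
  set m : ℤ := b.repr x i with hmdef
  have hdvd : ∀ k : ℕ, ((p : ℤ) ^ k) ∣ m := by
    intro k
    obtain ⟨y, hy⟩ := h k
    refine ⟨b.repr y i, ?_⟩
    have hx : x = ((p : ℤ) ^ k) • y := by
      rw [zsmul_eq_mul, hy]
      push_cast
      ring
    have : b.repr x = ((p : ℤ) ^ k) • b.repr y := by rw [hx]; exact map_zsmul b.repr _ _
    rw [hmdef, this, Finsupp.smul_apply, smul_eq_mul]
  have hle : ∀ k : ℕ, (p : ℤ) ^ k ≤ |m| := fun k =>
    Int.le_of_dvd (abs_pos.mpr hm) ((dvd_abs _ _).mpr (hdvd k))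
  set k := m.natAbs with hk
  have h1 : (m.natAbs : ℤ) < 2 ^ k := by
    exact_mod_cast Nat.lt_two_pow_self (n := m.natAbs)
  have h2 : (2 : ℤ) ^ k ≤ (p : ℤ) ^ k := by
    apply pow_le_pow_left₀ (by norm_num)
    exact_mod_cast hp
  have h3 := hle k
  rw [Int.abs_eq_natAbs] at h3
  omega

/-- Separating a nontrivial element of a subgroup generated by a finite set by a
homomorphism into a cyclic group of prime power order. -/
theorem exists_char {Γ : Type*} [CommGroup Γ] (S : Finset Γ) {γ₀ : Γ}
    (hmem : γ₀ ∈ Subgroup.closure (S : Set Γ)) (hne : γ₀ ≠ 1) :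
    ∃ (q : ℕ), 1 < q ∧ (∃ p k : ℕ, p.Prime ∧ 1 ≤ k ∧ q = p ^ k) ∧
      ∃ c : Γ → ZMod q,
      c γ₀ ≠ 0 ∧
      ∀ γ ∈ Subgroup.closure (S : Set Γ), ∀ δ ∈ Subgroup.closure (S : Set Γ),
        c (γ * δ) = c γ + c δ := by
  classical
  set H := Subgroup.closure (S : Set Γ) with hH
  haveI : Group.FG H := (Group.fg_iff_subgroup_fg H).mpr ⟨S, rfl⟩
  haveI : AddGroup.FG (Additive H) := inferInstance
  obtain ⟨n, ι, fι, p, hp, ee, ⟨F⟩⟩ :=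
    AddCommGroup.equiv_free_prod_directSum_zmod (Additive H)
  set g₀ : Additive H := Additive.ofMul (⟨γ₀, hmem⟩ : H) with hg₀
  have hg₀ne : g₀ ≠ 0 := by
    simp only [hg₀, Ne]
    intro hcontr
    apply hne
    have : (⟨γ₀, hmem⟩ : H) = 1 := hcontr
    exact congrArg Subtype.val this
  have hF : F g₀ ≠ 0 := fun hc => hg₀ne (by simpa using F.injective (by simpa using hc))
  have hcases : (F g₀).1 ≠ 0 ∨ (F g₀).2 ≠ 0 := by
    by_contra hcon
    push_neg at hcon
    exact hF (Prod.ext hcon.1 hcon.2)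
  have main : ∃ (p' k' : ℕ), p'.Prime ∧ 1 ≤ k' ∧
      ∃ ψ : Additive H →+ ZMod (p' ^ k'), ψ g₀ ≠ 0 := by
    rcases hcases with hv | hw
    · -- free part
      obtain ⟨i, hi⟩ : ∃ i, (F g₀).1 i ≠ 0 := by
        by_contra hcon
        push_neg at hcon
        exact hv (Finsupp.ext hcon)
      set m : ℤ := (F g₀).1 i with hm
      obtain ⟨P, hPle, hPprime⟩ := Nat.exists_infinite_primes (m.natAbs + 1)
      refine ⟨P, 1, hPprime, le_refl 1, ?_⟩
      refine ⟨(Int.castAddHom (ZMod (P ^ 1))).comp ((Finsupp.applyAddHom i).comp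
        ((AddMonoidHom.fst _ _).comp F.toAddMonoidHom)), ?_⟩
      simp only [AddMonoidHom.comp_apply, AddEquiv.coe_toAddMonoidHom,
        AddMonoidHom.coe_fst, Finsupp.applyAddHom_apply, Int.coe_castAddHom]
      rw [← hm]
      intro hcontr
      rw [ZMod.intCast_zmod_eq_zero_iff_dvd] at hcontr
      have h1 : ((P ^ 1 : ℕ) : ℤ) ≤ |m| := Int.le_of_dvd (abs_pos.mpr hi) ((dvd_abs _ _).mpr hcontr)
      rw [Int.abs_eq_natAbs] at h1
      have : (P : ℤ) ≤ (m.natAbs : ℤ) := by simpa using h1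
      omega
    · -- torsion part
      obtain ⟨i, hi⟩ : ∃ i, (F g₀).2 i ≠ 0 := by
        by_contra hcon
        push_neg at hcon
        exact hw (DFinsupp.ext hcon)
      have hee : 1 ≤ ee i := by
        by_contra hcon
        have h0 : ee i = 0 := by omega
        have h1 : p i ^ ee i = 1 := by rw [h0, pow_zero]
        haveI : Subsingleton (ZMod (p i ^ ee i)) := by
          rw [h1]; infer_instance
        exact hi (Subsingleton.elim _ _)
      refine ⟨p i, ee i, hp i, hee, ?_⟩
      refine ⟨(DFinsupp.evalAddMonoidHom i).comp ((AddMonoidHom.snd _ _).comp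
        F.toAddMonoidHom), ?_⟩
      exact hi
  obtain ⟨p', k', hp', hk', ψ, hψ⟩ := main
  refine ⟨p' ^ k', Nat.one_lt_pow (by omega) hp'.one_lt, ⟨p', k', hp', hk', rfl⟩,
    fun γ => if h : γ ∈ H then ψ (Additive.ofMul (⟨γ, h⟩ : H)) else 0, ?_, ?_⟩
  · simpa only [dif_pos hmem] using hψ
  · intro γ hγ δ hδ
    simp only [dif_pos hγ, dif_pos hδ, dif_pos (mul_mem hγ hδ)]
    have : (⟨γ * δ, mul_mem hγ hδ⟩ : H) = ⟨γ, hγ⟩ * ⟨δ, hδ⟩ := rfl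
    rw [this, ofMul_mul, map_add]

noncomputable section

open Polynomial

/-- The cyclotomic order `ℤ[ζ_q]`. -/
abbrev Cyc (q : ℕ) : Type := AdjoinRoot (Polynomial.cyclotomic q ℤ)

theorem cyc_isDomain {q : ℕ} (hq : 0 < q) : IsDomain (Cyc q) :=
  AdjoinRoot.isDomain_of_prime
    ((UniqueFactorizationMonoid.irreducible_iff_prime).mp (Polynomial.cyclotomic.irreducible hq))

/-- The power basis of `ℤ[ζ_q]` over `ℤ`. -/
def cycPB (q : ℕ) : PowerBasis ℤ (Cyc q) :=
  AdjoinRoot.powerBasis' (Polynomial.cyclotomic.monic q ℤ)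

theorem cyc_natCast_q_ne_zero {q : ℕ} (hq : 1 < q) : (q : Cyc q) ≠ 0 := by
  intro hcontr
  have h0 : ((q : ℤ[X]) : ℤ[X]) ≠ 0 := by
    exact_mod_cast (Nat.cast_ne_zero (R := ℤ[X])).mpr (by omega)
  have h1 : (AdjoinRoot.mk (cyclotomic q ℤ)) ((q : ℕ) : ℤ[X]) = 0 := by
    rw [map_natCast]; exact hcontr
  rw [AdjoinRoot.mk_eq_zero] at h1
  have h2 := Polynomial.natDegree_le_of_dvd h1 h0
  rw [Polynomial.natDegree_cyclotomic, Polynomial.natDegree_natCast] at h2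
  have := Nat.totient_pos.mpr (show 0 < q by omega)
  omega

theorem cyc_prim {q : ℕ} (hq : 1 < q) :
    IsPrimitiveRoot (AdjoinRoot.root (Polynomial.cyclotomic q ℤ)) q := by
  haveI : IsDomain (Cyc q) := cyc_isDomain (by omega)
  haveI : NeZero ((q : ℕ) : Cyc q) := ⟨cyc_natCast_q_ne_zero hq⟩
  rw [← Polynomial.isRoot_cyclotomic_iff (R := Cyc q)]
  rw [← Polynomial.map_cyclotomic q (AdjoinRoot.of (cyclotomic q ℤ))]
  exact AdjoinRoot.isRoot_root _

theorem cyc_dvd {q p k : ℕ} (hp : p.Prime) (hk : 1 ≤ k) (hqdef : q = p ^ k) :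
    (p : Cyc q) ∣ (AdjoinRoot.root (Polynomial.cyclotomic q ℤ) - 1) ^ q := by
  subst hqdef
  set q := p ^ k with hqdef
  have hq : 1 < q := Nat.one_lt_pow (by omega) hp.one_lt
  set ζ := AdjoinRoot.root (Polynomial.cyclotomic q ℤ) with hζdef
  have hζq : ζ ^ q = 1 := (cyc_prim hq).pow_eq_one
  obtain ⟨r, hr⟩ := exists_add_pow_prime_pow_eq hp ζ (-1) k
  rw [← hqdef] at hr
  have hsub : (ζ - 1 : Cyc q) = ζ + (-1) := by ring
  rw [hsub, hr, hζq]
  rcases hp.eq_two_or_odd' with h2 | hodd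
  · have heven : Even q := by
      rw [hqdef, h2]
      exact (Nat.even_pow.mpr ⟨even_iff_two_dvd.mpr dvd_rfl, by omega⟩)
    rw [heven.neg_one_pow]
    refine ⟨(1 - ζ * r), ?_⟩
    rw [h2]
    push_cast
    ring
  · have hoddq : Odd q := hodd.pow
    rw [hoddq.neg_one_pow]
    exact ⟨-(ζ * r), by ring⟩

theorem key_lemma {A Γ : Type*} [CommRing A]
    [Module.Free ℤ A] [Module.Finite ℤ A] [CommGroup Γ]
    (B : Γ → AddSubgroup A) (hB : IsGrading B) :
    ∀ e : A, IsIdempotentElem e → e ∈ B 1 := by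
  classical
  intro e he
  obtain ⟨f, ⟨hfB, hfsum⟩, hfuniq⟩ := hB.2 e
  have huniq : ∀ g : Γ →₀ A, (∀ γ, g γ ∈ B γ) → g.sum (fun _ x => x) = e → g = f :=
    fun g h1 h2 => hfuniq g ⟨h1, h2⟩
  -- the decomposition of `0` is trivial
  have hzero : ∀ g : Γ →₀ A, (∀ γ, g γ ∈ B γ) → g.sum (fun _ x => x) = 0 → g = 0 := by
    intro g h1 h2
    obtain ⟨z, _, hzu⟩ := hB.2 0
    have e1 : g = z := hzu g ⟨h1, h2⟩
    have e2 : (0 : Γ →₀ A) = z := hzu 0 ⟨fun γ => by simp [(B γ).zero_mem], by simp⟩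
    rw [e1, ← e2]
  -- convolution identity : the decomposition of `e * e = e` is the convolution of `f` with `f`
  have hconv : (f.sum fun γ x => f.sum fun δ y => Finsupp.single (γ * δ) (x * y)) = f := by
    apply huniq
    · intro τ
      simp only [Finsupp.sum_apply]
      apply AddSubgroup.sum_mem
      intro γ hγ
      apply AddSubgroup.sum_mem
      intro δ hδ
      simp only [Finsupp.single_apply]
      split_ifs with hτ
      · rw [← hτ]
        exact hB.1 γ δ (f γ) (hfB γ) (f δ) (hfB δ)
      · exact (B τ).zero_mem
    · rw [Finsupp.sum_sum_index (fun a => rfl) (fun a b₁ b₂ => rfl)]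
      have hinner : ∀ γ : Γ, ∀ x : A,
          (f.sum fun δ y => Finsupp.single (γ * δ) (x * y)).sum (fun _ x => x)
            = x * e := by
        intro γ x
        rw [Finsupp.sum_sum_index (fun a => rfl) (fun a b₁ b₂ => rfl)]
        have : (f.sum fun δ y => (Finsupp.single (γ * δ) (x * y)).sum fun _ x => x)
            = f.sum fun δ y => x * y := by
          apply Finsupp.sum_congr
          intro δ _
          rw [Finsupp.sum_single_index rfl]
        rw [this, ← Finsupp.mul_sum, hfsum]
      calc (f.sum fun γ x =>
            (f.sum fun δ y => Finsupp.single (γ * δ) (x * y)).sum fun _ x => x)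
          = f.sum fun γ x => x * e := Finsupp.sum_congr (fun γ _ => hinner γ (f γ))
        _ = (f.sum fun _ x => x) * e := (Finsupp.sum_mul e f).symm
        _ = e := by rw [hfsum]; exact he
  -- all components of `e` away from degree one vanish
  have hvanish : ∀ γ₀ : Γ, γ₀ ≠ 1 → f γ₀ = 0 := by
    intro γ₀ hγ₀ne
    by_contra hne0
    have hγ₀supp : γ₀ ∈ f.support := Finsupp.mem_support_iff.mpr hne0
    have hsubH : ∀ {γ : Γ}, γ ∈ f.support →
        γ ∈ Subgroup.closure ((f.support : Finset Γ) : Set Γ) :=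
      fun h => Subgroup.subset_closure (Finset.mem_coe.mpr h)
    obtain ⟨q, hq1, ⟨p, k, hp, hk, hqdef⟩, c, hc0, hcmul⟩ :=
      exists_char f.support (hsubH hγ₀supp) hγ₀ne
    haveI : NeZero q := ⟨by omega⟩
    haveI hdom : IsDomain (Cyc q) := cyc_isDomain (by omega)
    set ζ : Cyc q := AdjoinRoot.root (Polynomial.cyclotomic q ℤ) with hζdef
    have hprim : IsPrimitiveRoot ζ q := cyc_prim hq1
    have hζq : ζ ^ q = 1 := hprim.pow_eq_one
    set zp : ZMod q → Cyc q := fun z => ζ ^ z.val with hzp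
    have hmodpow : ∀ a : ℕ, ζ ^ (a % q) = ζ ^ a := by
      intro a
      conv_rhs => rw [← Nat.div_add_mod a q]
      rw [pow_add, pow_mul, hζq, one_pow, one_mul]
    have hzpadd : ∀ z w : ZMod q, zp (z + w) = zp z * zp w := by
      intro z w
      simp only [hzp]
      rw [ZMod.val_add, hmodpow, pow_add]
    have hzpne : ∀ z : ZMod q, z ≠ 0 → zp z ≠ 1 := by
      intro z hz hcontr
      have hdvd := hprim.dvd_of_pow_eq_one _ hcontr
      have hlt := ZMod.val_lt z
      have hval : z.val = 0 := Nat.eq_zero_of_dvd_of_lt hdvd hlt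
      exact hz ((ZMod.val_eq_zero z).mp hval)
    -- the tensor ring
    have bR := (Module.Free.chooseBasis ℤ A).tensorProduct (cycPB q).basis
    set T : (Γ →₀ A) →+ A ⊗[ℤ] Cyc q := Finsupp.liftAddHom (fun γ =>
      { toFun := fun x : A => x ⊗ₜ[ℤ] zp (c γ)
        map_zero' := TensorProduct.zero_tmul _ _
        map_add' := fun x y => TensorProduct.add_tmul x y _ }) with hT
    have hTsum : ∀ h : Γ →₀ A, T h = h.sum fun γ x => x ⊗ₜ[ℤ] zp (c γ) := fun h => rfl
    have hTsingle : ∀ (γ : Γ) (x : A), T (Finsupp.single γ x) = x ⊗ₜ[ℤ] zp (c γ) :=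
      fun γ x => Finsupp.liftAddHom_apply_single _ _ _
    set E : A ⊗[ℤ] Cyc q := T f with hE
    set E₀ : A ⊗[ℤ] Cyc q := e ⊗ₜ[ℤ] 1 with hE₀def
    have hE₀idem : E₀ * E₀ = E₀ := by
      rw [hE₀def, Algebra.TensorProduct.tmul_mul_tmul, he, one_mul]
    have hEE : E * E = f.sum fun γ x => f.sum fun δ y =>
        (x * y) ⊗ₜ[ℤ] zp (c γ + c δ) := by
      rw [hE, hTsum, Finsupp.sum_mul]
      apply Finsupp.sum_congr
      intro γ hγ
      rw [Finsupp.mul_sum]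
      apply Finsupp.sum_congr
      intro δ hδ
      rw [Algebra.TensorProduct.tmul_mul_tmul, ← hzpadd]
    have hEdecomp : E = f.sum fun γ x => f.sum fun δ y =>
        (x * y) ⊗ₜ[ℤ] zp (c (γ * δ)) := by
      conv_lhs => rw [hE, ← hconv]
      rw [map_finsuppSum]
      apply Finsupp.sum_congr
      intro γ _
      rw [map_finsuppSum]
      apply Finsupp.sum_congr
      intro δ _
      rw [hTsingle]
    have hEidem : E * E = E := by
      rw [hEE, hEdecomp]
      apply Finsupp.sum_congr
      intro γ hγ
      apply Finsupp.sum_congr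
      intro δ hδ
      rw [hcmul γ (hsubH hγ) δ (hsubH hδ)]
    -- the difference `E - E₀`
    have hE₀sum : E₀ = f.sum fun γ x => x ⊗ₜ[ℤ] (1 : Cyc q) := by
      rw [hE₀def, ← hfsum]
      exact TensorProduct.sum_tmul f.support (fun γ => f γ) 1
    have hdiff : E - E₀ = f.sum fun γ x => x ⊗ₜ[ℤ] (zp (c γ) - 1) := by
      rw [hE, hTsum, hE₀sum, ← Finsupp.sum_sub]
      apply Finsupp.sum_congr
      intro γ _
      rw [TensorProduct.tmul_sub]
    -- factor out `1 ⊗ (ζ - 1)`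
    set μ : A ⊗[ℤ] Cyc q := (1 : A) ⊗ₜ[ℤ] (ζ - 1) with hμ
    set D : A ⊗[ℤ] Cyc q :=
      f.sum fun γ x => x ⊗ₜ[ℤ] (∑ i ∈ Finset.range (c γ).val, ζ ^ i) with hD
    have hfactor : E - E₀ = μ * D := by
      rw [hdiff, hD, hμ, Finsupp.mul_sum]
      apply Finsupp.sum_congr
      intro γ _
      rw [Algebra.TensorProduct.tmul_mul_tmul, one_mul]
      congr 1
      rw [mul_comm, geom_sum_mul]
    -- odd powers of `E - E₀` are `E - E₀`
    have h3 : (E - E₀) ^ 3 = E - E₀ := by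
      linear_combination (E + 1 - 3 * E₀) * hEidem + (3 * E - E₀ - 1) * hE₀idem
    have hodd : ∀ j : ℕ, (E - E₀) ^ (2 * j + 1) = E - E₀ := by
      intro j
      induction j with
      | zero => simp
      | succ j ih =>
        have h2 : 2 * (j + 1) + 1 = (2 * j + 1) + 2 := by ring
        have h4 : (E - E₀) ^ ((2 * j + 1) + 2) = (E - E₀) ^ (2 * j + 1) * (E - E₀) ^ 2 :=
          pow_add _ _ _
        rw [h2, h4, ih]
        calc (E - E₀) * (E - E₀) ^ 2 = (E - E₀) ^ 3 := by ring
          _ = E - E₀ := h3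
    -- `E - E₀` is divisible by arbitrary powers of `p`
    obtain ⟨c₀, hc₀⟩ := cyc_dvd hp hk hqdef
    rw [← hζdef] at hc₀
    have hpcast : ((p : ℕ) : A ⊗[ℤ] Cyc q) = (1 : A) ⊗ₜ[ℤ] ((p : ℕ) : Cyc q) :=
      (map_natCast (Algebra.TensorProduct.includeRight :
        Cyc q →ₐ[ℤ] A ⊗[ℤ] Cyc q) p).symm
    have hdivisible : ∀ m : ℕ, ∃ y : A ⊗[ℤ] Cyc q,
        E - E₀ = ((p : ℕ) : A ⊗[ℤ] Cyc q) ^ m * y := by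
      intro m
      have h1 : μ ^ (2 * (q * m)) = (1 : A) ⊗ₜ[ℤ] (((ζ - 1) ^ q) ^ (2 * m)) := by
        rw [show 2 * (q * m) = q * (2 * m) by ring, hμ, pow_mul,
          Algebra.TensorProduct.tmul_pow, one_pow,
          Algebra.TensorProduct.tmul_pow, one_pow]
      have h2 : (((ζ - 1 : Cyc q) ^ q) ^ (2 * m))
          = ((p : ℕ) : Cyc q) ^ (2 * m) * c₀ ^ (2 * m) := by
        rw [hc₀, mul_pow]
      have h3 : (1 : A) ⊗ₜ[ℤ] (((p : ℕ) : Cyc q) ^ (2 * m) * c₀ ^ (2 * m))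
          = ((p : ℕ) : A ⊗[ℤ] Cyc q) ^ (2 * m) * ((1 : A) ⊗ₜ[ℤ] (c₀ ^ (2 * m))) := by
        rw [hpcast, Algebra.TensorProduct.tmul_pow,
          Algebra.TensorProduct.tmul_mul_tmul, one_pow, one_mul]
      have hμq : μ ^ (2 * (q * m))
          = ((p : ℕ) : A ⊗[ℤ] Cyc q) ^ (2 * m) * ((1 : A) ⊗ₜ[ℤ] (c₀ ^ (2 * m))) := by
        rw [h1, h2, h3]
      refine ⟨((p : ℕ) : A ⊗[ℤ] Cyc q) ^ m *
        (((1 : A) ⊗ₜ[ℤ] (c₀ ^ (2 * m))) * (μ * D ^ (2 * (q * m) + 1))), ?_⟩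
      have hstep : E - E₀ = (E - E₀) ^ (2 * (q * m) + 1) := (hodd (q * m)).symm
      rw [hstep, hfactor]
      have hexp : (μ * D) ^ (2 * (q * m) + 1)
          = μ ^ (2 * (q * m)) * (μ * D ^ (2 * (q * m) + 1)) := by
        rw [mul_pow, pow_succ]
        ring
      rw [hexp, hμq]
      ring
    have hzerodiff : E - E₀ = 0 :=
      eq_zero_of_forall_exists_pow_mul bR hp.two_le hdivisible
    have hsumzero : (f.sum fun γ x => x ⊗ₜ[ℤ] (zp (c γ) - 1)) = 0 := by
      rw [← hdiff]; exact hzerodiff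
    -- extract a coordinate
    have htne : zp (c γ₀) - 1 ≠ 0 := sub_ne_zero.mpr (hzpne _ hc0)
    obtain ⟨i, hi⟩ : ∃ i, (cycPB q).basis.repr (zp (c γ₀) - 1) i ≠ 0 := by
      by_contra hcon
      push_neg at hcon
      apply htne
      rw [← ((cycPB q).basis.repr).map_eq_zero_iff]
      ext j
      rw [Finsupp.coe_zero, Pi.zero_apply]
      exact hcon j
    set ℓ : Cyc q →ₗ[ℤ] ℤ := (cycPB q).basis.coord i with hℓ
    set Φ : (A ⊗[ℤ] Cyc q) →ₗ[ℤ] A := TensorProduct.lift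
      (LinearMap.mk₂ ℤ (fun x y => ℓ y • x)
        (fun m₁ m₂ n => smul_add (ℓ n) m₁ m₂)
        (fun r m n => smul_comm (ℓ n) r m)
        (fun m n₁ n₂ => by
          show ℓ (n₁ + n₂) • m = ℓ n₁ • m + ℓ n₂ • m
          rw [map_add, add_smul])
        (fun r m n => by
          show ℓ (r • n) • m = r • ℓ n • m
          rw [map_smul, smul_eq_mul, mul_smul])) with hΦ
    have happ : ∀ (x : A) (y : Cyc q), Φ (x ⊗ₜ[ℤ] y) = ℓ y • x := by
      intro x y
      rw [hΦ]
      rfl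
    have hPhisum : (f.sum fun γ x => ℓ (zp (c γ) - 1) • x) = 0 := by
      have h5 := congrArg Φ hsumzero
      rw [map_finsuppSum, map_zero] at h5
      rw [← h5]
      apply Finsupp.sum_congr
      intro γ _
      rw [happ]
    -- build the "twisted" decomposition of zero
    set g : Γ →₀ A := Finsupp.onFinset f.support
      (fun γ => ℓ (zp (c γ) - 1) • f γ)
      (fun γ h => by
        rw [Finsupp.mem_support_iff]
        intro hcontr
        apply h
        show ℓ (zp (c γ) - 1) • f γ = 0
        rw [hcontr, smul_zero]) with hg
    have hgapp : ∀ γ, g γ = ℓ (zp (c γ) - 1) • f γ := fun γ => rfl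
    have hgB : ∀ γ, g γ ∈ B γ := by
      intro γ
      rw [hgapp]
      exact AddSubgroup.zsmul_mem _ (hfB γ) _
    have hgsum : g.sum (fun _ x => x) = 0 := by
      rw [Finsupp.sum]
      rw [Finset.sum_subset (Finsupp.support_onFinset_subset (s := f.support))
        (fun γ _ hγ => Finsupp.notMem_support_iff.mp hγ)]
      calc (∑ γ ∈ f.support, g γ) = ∑ γ ∈ f.support, ℓ (zp (c γ) - 1) • f γ := by
            apply Finset.sum_congr rfl
            intro γ _
            rw [hgapp]
        _ = 0 := hPhisum
    have hg0 : g = 0 := hzero g hgB hgsum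
    have hsm : ℓ (zp (c γ₀) - 1) • f γ₀ = 0 := by
      have h6 : g γ₀ = 0 := by rw [hg0]; rfl
      rw [← hgapp γ₀]
      exact h6
    rcases smul_eq_zero.mp hsm with hcase | hcase
    · apply hi
      rw [hℓ] at hcase
      rw [← hcase, Module.Basis.coord_apply]
    · exact hne0 hcase
  -- conclude
  have hsuppsub : f.support ⊆ {1} := by
    intro γ hγ
    rw [Finset.mem_singleton]
    by_contra h
    exact (Finsupp.mem_support_iff.mp hγ) (hvanish γ h)
  have hone : e = f 1 := by
    rw [← hfsum, Finsupp.sum]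
    rw [Finset.sum_subset hsuppsub (fun γ _ hγ => Finsupp.notMem_support_iff.mp hγ)]
    exact Finset.sum_singleton _ _
  rw [hone]
  exact hfB 1

end

end GradedOrderAux

/-- In a graded order, all idempotents lie in the degree-one component, so
`Id(A) = Id(B 1)`; consequently `A` is connected iff `B 1` is connected. -/
theorem idempotents_in_degree_one {A Γ : Type*} [CommRing A]
    [Module.Free ℤ A] [Module.Finite ℤ A] [CommGroup Γ]
    (B : Γ → AddSubgroup A) (hB : IsGrading B) :
    (∀ e : A, IsIdempotentElem e → e ∈ B 1) ∧
    (((0 : A) ≠ 1 ∧ ∀ e : A, IsIdempotentElem e → e = 0 ∨ e = 1) ↔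
      ((0 : A) ≠ 1 ∧ ∀ e ∈ B 1, IsIdempotentElem e → e = 0 ∨ e = 1)) := by
  have key := GradedOrderAux.key_lemma B hB
  refine ⟨key, ?_⟩
  constructor
  · rintro ⟨h0, hconn⟩
    exact ⟨h0, fun e _ he => hconn e he⟩
  · rintro ⟨h0, hconn⟩
    exact ⟨h0, fun e he => hconn e (key e he) he⟩
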